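/- For any triple (d_1, d_2, d_3) of positive reals summing to 1 with d_1 = 1/2, and any two-colouring of the circle of unit perimeter, for every ε > 0 there is a monochromatic triple of points whose cyclic arc-distances are within ε of (d_1, d_2, d_3) in some order. -/

import Mathlib

/-- Arc-distance on the unit-perimeter circle modelled by ℝ. -/
noncomputable def arcDist (x y : ℝ) : ℝ := min (Int.fract (x - y)) (1 - Int.fract (x - y))

lemma arcDist_self (x : ℝ) : arcDist x x = 0 := by
  norm_num [arcDist]

lemma arcDist_le {a t ε : ℝ} (h : |a - t| ≤ ε) : arcDist a t ≤ ε := by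
  rcases le_or_gt (1/2) ε with h2 | h2
  · have hf : Int.fract (a - t) < 1 := Int.fract_lt_one _
    have hf0 : 0 ≤ Int.fract (a - t) := Int.fract_nonneg _
    unfold arcDist
    rcases le_or_gt (Int.fract (a - t)) (1/2) with h3 | h3
    · exact le_trans (min_le_left _ _) (le_trans h3 h2)
    · exact le_trans (min_le_right _ _) (le_trans (by linarith) h2)
  · rcases abs_le.mp h with ⟨h1, h1'⟩
    rcases le_or_gt 0 (a - t) with h0 | h0
    · have : Int.fract (a - t) = a - t := Int.fract_eq_self.mpr ⟨h0, by linarith⟩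
      unfold arcDist; rw [this]
      exact le_trans (min_le_left _ _) h1'
    · have e1 : Int.fract (a - t) = Int.fract ((a - t) + 1) := (Int.fract_add_one _).symm
      have e2 : Int.fract ((a - t) + 1) = (a - t) + 1 :=
        Int.fract_eq_self.mpr ⟨by linarith, by linarith⟩
      unfold arcDist; rw [e1, e2]
      exact le_trans (min_le_right _ _) (by linarith)

lemma per_int (c : ℝ → Bool) (hper : ∀ x, c (x + 1) = c x) :
    ∀ (n : ℤ) (x : ℝ), c (x + n) = c x := by
  intro n
  induction n using Int.induction_on with
  | zero => intro x; norm_num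
  | succ k ih =>
      intro x
      have e : (x + ((k : ℤ) + 1 : ℤ)) = (x + (k : ℤ)) + 1 := by push_cast; ring
      rw [e, hper, ih]
  | pred k ih =>
      intro x
      have h1 := ih x
      push_cast at h1 ⊢
      have h2 := hper (x - (k : ℝ) - 1)
      have e1 : x - (k : ℝ) - 1 + 1 = x + -(k : ℝ) := by ring
      have e2 : x + (-(k : ℝ) - 1) = x - (k : ℝ) - 1 := by ring
      rw [e1] at h2
      rw [e2]
      exact h2.symm.trans h1

lemma build (d : Fin 3 → ℝ) (c : ℝ → Bool) (ε : ℝ) (b : Bool) (x : ℝ)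
    (σ : Equiv.Perm (Fin 3)) (q : Fin 3 → ℝ)
    (h0 : c (q 0) = b ∧ arcDist (q 0) x ≤ ε)
    (h1 : c (q 1) = b ∧ arcDist (q 1) (x + d (σ 0)) ≤ ε)
    (h2 : c (q 2) = b ∧ arcDist (q 2) (x + (d (σ 0) + d (σ 1))) ≤ ε) :
    ∃ (b : Bool) (x : ℝ) (σ : Equiv.Perm (Fin 3)) (q : Fin 3 → ℝ),
      ∀ j : Fin 3, c (q j) = b ∧
        arcDist (q j) (x + ∑ i ∈ Finset.univ.filter (fun i => i < j), d (σ i)) ≤ ε := by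
  refine ⟨b, x, σ, q, ?_⟩
  intro j
  fin_cases j
  · have e : (Finset.univ.filter (fun i : Fin 3 => i < 0)) = ∅ := by decide
    simpa [e] using h0
  · show c (q 1) = b ∧
        arcDist (q 1) (x + ∑ i ∈ Finset.univ.filter (fun i => i < (1 : Fin 3)), d (σ i)) ≤ ε
    have e : (Finset.univ.filter (fun i : Fin 3 => i < 1)) = {0} := by decide
    rw [e, Finset.sum_singleton]
    exact h1
  · show c (q 2) = b ∧
        arcDist (q 2) (x + ∑ i ∈ Finset.univ.filter (fun i => i < (2 : Fin 3)), d (σ i)) ≤ ε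
    have e : (Finset.univ.filter (fun i : Fin 3 => i < 2)) = ({0, 1} : Finset (Fin 3)) := by decide
    have e2 : ∑ i ∈ ({0, 1} : Finset (Fin 3)), d (σ i) = d (σ 0) + d (σ 1) :=
      Finset.sum_pair (by decide)
    rw [e, e2]
    exact h2

lemma mixed_point (c : ℝ → Bool) (hper : ∀ x, c (x + 1) = c x)
    (hnc : ∃ v, c v ≠ c 0) (ε : ℝ) (hε : 0 < ε) :
    ∃ p : ℝ, ∀ v : Bool, ∃ q, |q - p| ≤ ε ∧ c q = v := by
  obtain ⟨v, hv⟩ := hnc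
  -- move v into (0,1)
  have hfract : c (Int.fract v) = c v := by
    have := per_int c hper ⌊v⌋ (Int.fract v)
    rw [show Int.fract v + (⌊v⌋ : ℝ) = v by rw [Int.fract]; ring] at this
    exact this.symm
  set w := Int.fract v with hw
  have hwc : c w ≠ c 0 := by rw [hfract]; exact hv
  have hw0 : 0 < w := by
    rcases lt_or_eq_of_le (Int.fract_nonneg v) with h | h
    · exact h
    · exact absurd (by rw [hw, ← h]) hwc
  set S : Set ℝ := {t : ℝ | t ∈ Set.Icc 0 w ∧ c t ≠ c 0} with hS
  have hne : w ∈ S := ⟨⟨le_of_lt hw0, le_refl w⟩, hwc⟩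
  have hbdd : BddBelow S := ⟨0, fun t ht => ht.1.1⟩
  set p := sInf S with hp
  have hp0 : 0 ≤ p := le_csInf ⟨w, hne⟩ (fun t ht => ht.1.1)
  have hpw : p ≤ w := csInf_le hbdd hne
  have claim1 : ∃ q, |q - p| ≤ ε ∧ c q ≠ c 0 := by
    obtain ⟨t, htS, htlt⟩ := exists_lt_of_csInf_lt ⟨w, hne⟩ (by linarith : sInf S < p + ε)
    refine ⟨t, ?_, htS.2⟩
    have hpt : p ≤ t := csInf_le hbdd htS
    rw [abs_le]; constructor <;> linarith
  have claim2 : ∃ q, |q - p| ≤ ε ∧ c q = c 0 := by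
    rcases eq_or_lt_of_le hp0 with h | h
    · exact ⟨0, by rw [← h]; simpa using hε.le, rfl⟩
    · set t' := max 0 (p - ε) with ht'
      have ht'lt : t' < p := max_lt h (by linarith)
      have ht'mem : t' ∈ Set.Icc 0 w := ⟨le_max_left _ _, by linarith⟩
      have ht'not : t' ∉ S := fun hmem => absurd (csInf_le hbdd hmem) (not_le.mpr ht'lt)
      have hct' : c t' = c 0 := by
        by_contra hcc
        exact ht'not ⟨ht'mem, hcc⟩
      refine ⟨t', ?_, hct'⟩
      have : p - ε ≤ t' := le_max_right _ _
      rw [abs_le]; constructor <;> linarith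
  refine ⟨p, ?_⟩
  intro b
  obtain ⟨q1, hq1, hq1'⟩ := claim2
  obtain ⟨q2, hq2, hq2'⟩ := claim1
  by_cases hb : b = c 0
  · exact ⟨q1, hq1, by rw [hq1', hb]⟩
  · refine ⟨q2, hq2, ?_⟩
    revert hq2' hb
    cases b <;> cases c 0 <;> cases c q2 <;> simp

/-- Any triple of positive reals summing to 1 with `d 0 = 1/2` is nearly-Ramsey:
every 1-periodic two-colouring of ℝ contains, for every `ε > 0`, a monochromatic triple
`ε`-close to a permuted copy of the triple. -/
theorem stmt_12 (d : Fin 3 → ℝ) (hpos : ∀ i, 0 < d i) (hsum : ∑ i, d i = 1)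
    (hd0 : d 0 = 1/2) (c : ℝ → Bool) (hper : ∀ x, c (x + 1) = c x)
    (ε : ℝ) (hε : 0 < ε) :
    ∃ (b : Bool) (x : ℝ) (σ : Equiv.Perm (Fin 3)) (q : Fin 3 → ℝ),
      ∀ j : Fin 3, c (q j) = b ∧
        arcDist (q j) (x + ∑ i ∈ Finset.univ.filter (fun i => i < j), d (σ i)) ≤ ε := by
  have h12 : d 1 + d 2 = 1/2 := by
    have h := hsum
    rw [Fin.sum_univ_three] at h
    linarith
  by_cases hconst : ∀ y, c y = c 0
  · -- constant colouring : take the exact triple with identity permutation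
    refine build d c ε (c 0) 0 (Equiv.refl _) ![0, 0 + d 0, 0 + (d 0 + d 1)] ?_ ?_ ?_
    · exact ⟨by simpa using hconst 0, by simpa [arcDist_self] using hε.le⟩
    · exact ⟨hconst _, by simpa [arcDist_self] using hε.le⟩
    · exact ⟨hconst _, by simpa [arcDist_self] using hε.le⟩
  · push_neg at hconst
    obtain ⟨p, hmix⟩ := mixed_point c hper hconst ε hε
    have e3 : (finRotate 3) (0 : Fin 3) = 1 := by decide
    have e4 : (finRotate 3) (1 : Fin 3) = 2 := by decide
    have e5 : (Equiv.swap (0 : Fin 3) 2) 0 = 2 := by decide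
    have e6 : (Equiv.swap (0 : Fin 3) 2) 1 = 1 := by decide
    by_cases hA : c (p + d 1) = c (p + (d 1 + d 2))
    · -- triple (p, p + d1, p + 1/2), perturbing the first point
      obtain ⟨qp, hqp, hcqp⟩ := hmix (c (p + d 1))
      refine build d c ε (c (p + d 1)) p (finRotate 3) ![qp, p + d 1, p + (d 1 + d 2)]
        ⟨hcqp, arcDist_le hqp⟩ ?_ ?_
      · refine ⟨rfl, ?_⟩
        rw [e3]
        simpa [arcDist_self] using hε.le
      · refine ⟨hA.symm, ?_⟩
        rw [e3, e4]
        simpa [arcDist_self] using hε.le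
    · by_cases hB : c (p - d 2) = c (p + d 1)
      · -- triple (p - d2, p, p + d1), perturbing middle point
        obtain ⟨qp, hqp, hcqp⟩ := hmix (c (p + d 1))
        refine build d c ε (c (p + d 1)) (p - d 2) (Equiv.swap 0 2)
          ![p - d 2, qp, p + d 1] ⟨hB, ?_⟩ ?_ ?_
        · simpa [arcDist_self] using hε.le
        · refine ⟨hcqp, ?_⟩
          rw [e5, show p - d 2 + d 2 = p by ring]
          exact arcDist_le hqp
        · refine ⟨rfl, ?_⟩
          rw [e5, e6, show p - d 2 + (d 2 + d 1) = p + d 1 by ring]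
          simpa [arcDist_self] using hε.le
      · -- triple (p - 1/2, p - d2, p), perturbing last point
        have hC : c (p - d 2) = c (p + (d 1 + d 2)) := by
          revert hA hB
          cases c (p + d 1) <;> cases c (p + (d 1 + d 2)) <;> cases c (p - d 2) <;> simp
        have hper2 : c (p - (d 1 + d 2)) = c (p + (d 1 + d 2)) := by
          have := hper (p - (d 1 + d 2))
          rw [show p - (d 1 + d 2) + 1 = p + (d 1 + d 2) by rw [h12]; ring] at this
          exact this.symm
        obtain ⟨qp, hqp, hcqp⟩ := hmix (c (p - d 2))
        refine build d c ε (c (p - d 2)) (p - (d 1 + d 2)) (finRotate 3)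
          ![p - (d 1 + d 2), p - d 2, qp] ⟨hper2.trans hC.symm, ?_⟩ ?_ ?_
        · simpa [arcDist_self] using hε.le
        · refine ⟨rfl, ?_⟩
          rw [e3, show p - (d 1 + d 2) + d 1 = p - d 2 by ring]
          simpa [arcDist_self] using hε.le
        · refine ⟨hcqp, ?_⟩
          rw [e3, e4, show p - (d 1 + d 2) + (d 1 + d 2) = p by ring]
          exact arcDist_le hqp
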